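/- Assume F : ℝ^d_≥ → ℝ^d is block-constant on all of ℝ^d_≥ and Lipschitz continuous with Lipschitz constant ‖F‖_Lip (with respect to the Euclidean norm). Then for all d×d Hermitian matrices A and B, ‖𝓛_F(A) − 𝓛_F(B)‖₂ ≤ ‖F‖_Lip ‖A − B‖₂, where ‖·‖₂ is the Frobenius norm. -/

import Mathlib

open Matrix

/-- The Euclidean norm of a vector in `ℝ^d`. -/
noncomputable def eucNorm {d : ℕ} (x : Fin d → ℝ) : ℝ :=
  Real.sqrt (∑ i, (x i) ^ 2)

/-- The Frobenius norm of a complex `d × d` matrix. -/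
noncomputable def frob {d : ℕ} (M : Matrix (Fin d) (Fin d) ℂ) : ℝ :=
  Real.sqrt (∑ i, ∑ j, ‖M i j‖ ^ 2)

lemma eucNorm_sq {d : ℕ} (x : Fin d → ℝ) : eucNorm x ^ 2 = ∑ i, (x i) ^ 2 := by
  rw [eucNorm, Real.sq_sqrt]
  exact Finset.sum_nonneg fun i _ => sq_nonneg _

lemma adj_bound {d : ℕ}
    (F : (Fin d → ℝ) → Fin d → ℝ) (K : ℝ)
    (hbc : ∀ x : Fin d → ℝ, Antitone x → ∀ m n, x m = x n → F x m = F x n)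
    (hLip : ∀ x y : Fin d → ℝ, Antitone x → Antitone y →
      eucNorm (F x - F y) ≤ K * eucNorm (x - y))
    (hK : 0 ≤ K)
    (x : Fin d → ℝ) (hx : Antitone x) (a b : Fin d) (hab : (b : ℕ) = (a : ℕ) + 1) :
    |F x a - F x b| ≤ K * (x a - x b) := by
  have hab' : a < b := by omega
  have hne : a ≠ b := ne_of_lt hab'
  set c : ℝ := (x a + x b) / 2 with hc
  have hxba : x b ≤ x a := hx hab'.le
  have hcxa : c ≤ x a := by rw [hc]; linarith
  have hxbc : x b ≤ c := by rw [hc]; linarith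
  set z : Fin d → ℝ := fun k => if k = a ∨ k = b then c else x k with hz
  have hza : z a = c := by simp [hz]
  have hzb : z b = c := by simp [hz]
  have hzo : ∀ k, k ≠ a → k ≠ b → z k = x k := by
    intro k h1 h2; simp [hz, h1, h2]
  have hzanti : Antitone z := by
    intro i j hij
    rcases eq_or_ne i a with ria | nia
    · rcases eq_or_ne j a with rja | nja
      · rw [ria, rja]
      · rcases eq_or_ne j b with rjb | njb
        · rw [ria, rjb, hza, hzb]
        · have : b ≤ j := by omega
          have hbj : b < j := lt_of_le_of_ne this (by omega)
          rw [ria, hza, hzo j nja njb]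
          exact le_trans (le_trans (hx hbj.le) hxbc) (le_refl c)
    · rcases eq_or_ne i b with rib | nib
      · rcases eq_or_ne j a with rja | nja
        · omega
        · rcases eq_or_ne j b with rjb | njb
          · rw [rib, rjb]
          · have hbj : b < j := by omega
            rw [rib, hzb, hzo j nja njb]
            exact le_trans (hx hbj.le) hxbc
      · rcases eq_or_ne j a with rja | nja
        · have : i < a := by omega
          rw [rja, hza, hzo i nia nib]
          exact le_trans hcxa (hx this.le)
        · rcases eq_or_ne j b with rjb | njb
          · have : i < a := by omega
            rw [rjb, hzb, hzo i nia nib]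
            exact le_trans hcxa (hx this.le)
          · rw [hzo i nia nib, hzo j nja njb]; exact hx hij
  -- norm of x - z
  have hpairmem : ∀ k : Fin d, k ∉ ({a, b} : Finset (Fin d)) → ((x - z) k)^2 = 0 := by
    intro k hk
    simp only [Finset.mem_insert, Finset.mem_singleton] at hk
    push_neg at hk
    rw [Pi.sub_apply, hzo k hk.1 hk.2]; ring
  have hsum : ∑ k, ((x - z) k)^2 = ((x-z) a)^2 + ((x-z) b)^2 := by
    rw [← Finset.sum_subset (Finset.subset_univ ({a,b} : Finset (Fin d)))
      (fun k _ hk => hpairmem k hk)]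
    rw [Finset.sum_pair hne]
  set h : ℝ := x a - x b with hh
  have hh0 : 0 ≤ h := by linarith
  have hxz : eucNorm (x - z) ^ 2 = h^2 / 2 := by
    rw [eucNorm_sq, hsum, Pi.sub_apply, Pi.sub_apply, hza, hzb, hc, hh]; ring
  have hFz : F z a = F z b := hbc z hzanti a b (by rw [hza, hzb])
  clear_value z c h
  have hsq : (F x a - F x b)^2 ≤ (K * h)^2 := by
    have e1 : F x a - F x b = (F x - F z) a - (F x - F z) b := by
      rw [Pi.sub_apply, Pi.sub_apply, hFz]; ring
    have e2 : ((F x - F z) a)^2 + ((F x - F z) b)^2 ≤ eucNorm (F x - F z)^2 := by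
      rw [eucNorm_sq]
      calc (F x - F z) a ^ 2 + (F x - F z) b ^ 2
          = ∑ k ∈ ({a,b} : Finset (Fin d)), (F x - F z) k ^ 2 :=
            (Finset.sum_pair (f := fun k => (F x - F z) k ^ 2) hne).symm
        _ ≤ ∑ k, (F x - F z) k ^ 2 :=
            Finset.sum_le_sum_of_subset_of_nonneg (Finset.subset_univ _)
              (fun k _ _ => sq_nonneg _)
    have e3 : eucNorm (F x - F z) ≤ K * eucNorm (x - z) := hLip x z hx hzanti
    have e4 : eucNorm (F x - F z)^2 ≤ K^2 * (h^2/2) := by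
      have h5 : 0 ≤ eucNorm (F x - F z) := Real.sqrt_nonneg _
      have h6 : 0 ≤ eucNorm (x - z) := Real.sqrt_nonneg _
      nlinarith [hxz]
    rw [e1]
    have e5 : ((F x - F z) a - (F x - F z) b)^2
        ≤ 2 * ((F x - F z) a ^ 2 + (F x - F z) b ^ 2) := by
      nlinarith [sq_nonneg ((F x - F z) a + (F x - F z) b)]
    have e6 : (K * h)^2 = K^2 * h^2 := by ring
    linarith [e5, e2, e4, e6]
  calc |F x a - F x b| = Real.sqrt ((F x a - F x b)^2) := (Real.sqrt_sq_eq_abs _).symm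
    _ ≤ Real.sqrt ((K*h)^2) := Real.sqrt_le_sqrt hsq
    _ = |K*h| := Real.sqrt_sq_eq_abs _
    _ = K * h := abs_of_nonneg (by positivity)

lemma pair_bound {d : ℕ}
    (F : (Fin d → ℝ) → Fin d → ℝ) (K : ℝ)
    (hbc : ∀ x : Fin d → ℝ, Antitone x → ∀ m n, x m = x n → F x m = F x n)
    (hLip : ∀ x y : Fin d → ℝ, Antitone x → Antitone y →
      eucNorm (F x - F y) ≤ K * eucNorm (x - y))
    (hK : 0 ≤ K)
    (x : Fin d → ℝ) (hx : Antitone x) (a b : Fin d) (hab : a ≤ b) :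
    |F x a - F x b| ≤ K * (x a - x b) := by
  obtain ⟨n, hn⟩ : ∃ n : ℕ, (b : ℕ) = (a : ℕ) + n := ⟨b - a, by omega⟩
  induction n generalizing b with
  | zero =>
    have : a = b := by omega
    subst this
    simp
  | succ n ih =>
    rcases Nat.eq_zero_or_pos n with h0 | hpos
    · subst h0
      exact adj_bound F K hbc hLip hK x hx a b (by omega)
    · have hbpos : 0 < (b : ℕ) := by omega
      have hblt : (b : ℕ) - 1 < d := by omega
      set b' : Fin d := ⟨(b : ℕ) - 1, hblt⟩ with hb'
      have h1 : a ≤ b' := by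
        rw [Fin.le_def]; simp [hb']; omega
      have h2 : |F x a - F x b'| ≤ K * (x a - x b') :=
        ih b' h1 (by simp [hb']; omega)
      have h3 : |F x b' - F x b| ≤ K * (x b' - x b) :=
        adj_bound F K hbc hLip hK x hx b' b (by simp [hb']; omega)
      calc |F x a - F x b| ≤ |F x a - F x b'| + |F x b' - F x b| := by
            have := abs_sub_le (F x a) (F x b') (F x b); linarith [this]
        _ ≤ K * (x a - x b') + K * (x b' - x b) := add_le_add h2 h3
        _ = K * (x a - x b) := by ring

lemma star_bound {d : ℕ}
    (F : (Fin d → ℝ) → Fin d → ℝ) (K : ℝ)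
    (hbc : ∀ x : Fin d → ℝ, Antitone x → ∀ m n, x m = x n → F x m = F x n)
    (hLip : ∀ x y : Fin d → ℝ, Antitone x → Antitone y →
      eucNorm (F x - F y) ≤ K * eucNorm (x - y))
    (hK : 0 ≤ K)
    (x y : Fin d → ℝ) (hx : Antitone x) (hy : Antitone y)
    (m n p q : Fin d) (hmn : m ≤ n) (hpq : p ≤ q) :
    (F x m - F x n) * (F y p - F y q) ≤ K^2 * ((x m - x n) * (y p - y q)) := by
  have h1 := pair_bound F K hbc hLip hK x hx m n hmn
  have h2 := pair_bound F K hbc hLip hK y hy p q hpq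
  calc (F x m - F x n) * (F y p - F y q)
      ≤ |(F x m - F x n) * (F y p - F y q)| := le_abs_self _
    _ = |F x m - F x n| * |F y p - F y q| := abs_mul _ _
    _ ≤ (K * (x m - x n)) * (K * (y p - y q)) := by
        apply mul_le_mul h1 h2 (abs_nonneg _)
        have := abs_nonneg (F x m - F x n); linarith
    _ = K^2 * ((x m - x n) * (y p - y q)) := by ring

def invCount {d : ℕ} (σ : Equiv.Perm (Fin d)) : ℕ :=
  (Finset.univ.filter (fun p : Fin d × Fin d => p.1 < p.2 ∧ σ p.2 < σ p.1)).card

lemma swap_sum_le {d : ℕ} (c : Fin d → Fin d → ℝ) (σ : Equiv.Perm (Fin d))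
    (a b : Fin d) (hne : a ≠ b)
    (hkey : c a (σ a) + c b (σ b) - c b (σ a) - c a (σ b) ≤ 0) :
    ∑ m, c m (σ m) ≤ ∑ m, c m ((σ * Equiv.swap a b) m) := by
  have hre : ∑ m, c m ((σ * Equiv.swap a b) m) = ∑ m, c (Equiv.swap a b m) (σ m) := by
    simp only [Equiv.Perm.mul_apply]
    exact Fintype.sum_equiv (Equiv.swap a b) _ _ (fun x => by simp [Equiv.swap_apply_self])
  rw [hre, ← sub_nonpos, ← Finset.sum_sub_distrib]
  have hvanish : ∀ m : Fin d, m ∉ ({a, b} : Finset (Fin d)) →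
      c m (σ m) - c (Equiv.swap a b m) (σ m) = 0 := by
    intro m hm
    simp only [Finset.mem_insert, Finset.mem_singleton] at hm
    push_neg at hm
    rw [Equiv.swap_apply_of_ne_of_ne hm.1 hm.2]
    ring
  rw [← Finset.sum_subset (Finset.subset_univ ({a,b} : Finset (Fin d)))
    (fun m _ hm => hvanish m hm), Finset.sum_pair hne]
  rw [Equiv.swap_apply_left, Equiv.swap_apply_right]
  linarith

lemma swap_inv_lt {d : ℕ} (σ : Equiv.Perm (Fin d)) (a b : Fin d)
    (hab : (b : ℕ) = (a : ℕ) + 1) (hinv : σ b < σ a) :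
    invCount (σ * Equiv.swap a b) < invCount σ := by
  set τ := Equiv.swap a b with hτ
  have haneb : a ≠ b := by
    intro h; rw [h] at hab; omega
  have hvτ : ∀ k : Fin d, ((τ k : Fin d) : ℕ) =
      if (k : ℕ) = (a : ℕ) then (b : ℕ) else if (k : ℕ) = (b : ℕ) then (a : ℕ) else (k : ℕ) := by
    intro k
    rcases eq_or_ne k a with rfl | hka
    · rw [hτ, Equiv.swap_apply_left, if_pos rfl]
    · rcases eq_or_ne k b with rfl | hkb
      · rw [hτ, Equiv.swap_apply_right, if_neg (fun h => hka (Fin.ext h)), if_pos rfl]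
      · rw [hτ, Equiv.swap_apply_of_ne_of_ne hka hkb, if_neg (fun h => hka (Fin.ext h)),
          if_neg (fun h => hkb (Fin.ext h))]
  classical
  set Inv : Equiv.Perm (Fin d) → Finset (Fin d × Fin d) :=
    fun ρ => Finset.univ.filter (fun p : Fin d × Fin d => p.1 < p.2 ∧ ρ p.2 < ρ p.1) with hInv
  have hmem : ∀ ρ p, p ∈ Inv ρ ↔ (p.1 < p.2 ∧ ρ p.2 < ρ p.1) := by
    intro ρ p
    rw [hInv]
    simp [Finset.mem_filter]
  set φ : Fin d × Fin d → Fin d × Fin d := fun p => (τ p.1, τ p.2) with hφ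
  have hinjτ : Function.Injective τ := Equiv.injective τ
  have hinjφ : Function.Injective φ := by
    intro p q h
    rw [hφ] at h
    simp only [Prod.mk.injEq] at h
    exact Prod.ext (hinjτ h.1) (hinjτ h.2)
  have hsub : (Inv (σ * τ)).image φ ⊆ (Inv σ).erase (a, b) := by
    intro p hp
    rw [Finset.mem_image] at hp
    obtain ⟨q, hq, rfl⟩ := hp
    rw [hmem] at hq
    obtain ⟨hq12, hqσ⟩ := hq
    simp only [Equiv.Perm.mul_apply] at hqσ
    have hnab : ¬(q.1 = a ∧ q.2 = b) := by
      rintro ⟨h1, h2⟩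
      rw [h1, h2] at hqσ
      rw [Equiv.swap_apply_left, Equiv.swap_apply_right] at hqσ
      exact absurd hqσ (not_lt.mpr hinv.le)
    have hord : τ q.1 < τ q.2 := by
      have h1 := hvτ q.1
      have h2 := hvτ q.2
      have hq12' : (q.1 : ℕ) < (q.2 : ℕ) := hq12
      rw [Fin.lt_def]
      have hna : ¬((q.1 : ℕ) = (a : ℕ) ∧ (q.2 : ℕ) = (b : ℕ)) := by
        rintro ⟨u1, u2⟩
        exact hnab ⟨Fin.ext u1, Fin.ext u2⟩
      split_ifs at h1 h2 <;> omega
    rw [Finset.mem_erase]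
    constructor
    · rintro h
      have h1 : τ q.1 = a := congrArg Prod.fst h
      have h2 : τ q.2 = b := congrArg Prod.snd h
      have : q.1 = b := by
        have := congrArg τ h1
        rwa [Equiv.swap_apply_self, Equiv.swap_apply_left] at this
      have h2' : q.2 = a := by
        have := congrArg τ h2
        rwa [Equiv.swap_apply_self, Equiv.swap_apply_right] at this
      rw [this, h2'] at hq12
      have : (a:ℕ) < (b:ℕ) := by omega
      exact absurd hq12 (by rw [Fin.lt_def]; omega)
    · rw [hmem]
      exact ⟨hord, hqσ⟩
  have habmem : (a, b) ∈ Inv σ := by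
    rw [hmem]
    exact ⟨show a < b by rw [Fin.lt_def]; omega, hinv⟩
  calc invCount (σ * τ) = ((Inv (σ * τ)).image φ).card :=
        (Finset.card_image_of_injective _ hinjφ).symm
    _ ≤ ((Inv σ).erase (a, b)).card := Finset.card_le_card hsub
    _ < (Inv σ).card := Finset.card_erase_lt_of_mem habmem
    _ = invCount σ := rfl

lemma perm_sum_le {d : ℕ}
    (F : (Fin d → ℝ) → Fin d → ℝ) (K : ℝ)
    (hbc : ∀ x : Fin d → ℝ, Antitone x → ∀ m n, x m = x n → F x m = F x n)
    (hLip : ∀ x y : Fin d → ℝ, Antitone x → Antitone y →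
      eucNorm (F x - F y) ≤ K * eucNorm (x - y))
    (hK : 0 ≤ K)
    (α β : Fin d → ℝ) (hα : Antitone α) (hβ : Antitone β)
    (σ : Equiv.Perm (Fin d)) :
    ∑ m, ((F α m - F β (σ m))^2 - K^2 * (α m - β (σ m))^2) ≤ 0 := by
  suffices H : ∀ N : ℕ, ∀ σ : Equiv.Perm (Fin d), invCount σ = N →
      ∑ m, ((F α m - F β (σ m))^2 - K^2 * (α m - β (σ m))^2) ≤ 0 by
    exact H (invCount σ) σ rfl
  intro N
  induction N using Nat.strong_induction_on with
  | _ N ih =>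
    intro σ hσN
    by_cases hadj : ∃ i : ℕ, ∃ hi : i + 1 < d, σ ⟨i+1, hi⟩ < σ ⟨i, Nat.lt_of_succ_lt hi⟩
    · -- uncross an adjacent inversion
      obtain ⟨i, hi, hlt⟩ := hadj
      set a : Fin d := ⟨i, Nat.lt_of_succ_lt hi⟩ with ha
      set b : Fin d := ⟨i+1, hi⟩ with hb
      have hab : (b : ℕ) = (a : ℕ) + 1 := rfl
      have hne : a ≠ b := by
        intro h
        have := congrArg Fin.val h
        omega
      set c : Fin d → Fin d → ℝ :=
        fun m n => (F α m - F β n)^2 - K^2 * (α m - β n)^2 with hc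
      have hstar := star_bound F K hbc hLip hK α β hα hβ a b (σ b) (σ a)
        (by rw [Fin.le_def]; omega) hlt.le
      have hkey : c a (σ a) + c b (σ b) - c b (σ a) - c a (σ b) ≤ 0 := by
        rw [hc]
        simp only
        nlinarith [hstar]
      have hstep := swap_sum_le c σ a b hne hkey
      have hcnt := swap_inv_lt σ a b hab hlt
      rw [hσN] at hcnt
      exact le_trans hstep (ih _ hcnt _ rfl)
    · -- no adjacent inversion: σ is the identity
      push_neg at hadj
      have hmono : StrictMono σ := by
        have hstep : ∀ (u v : Fin d), (v : ℕ) = (u : ℕ) + 1 → σ u < σ v := by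
          intro u v huv
          have h1 : (u : ℕ) + 1 < d := by omega
          have eu : (⟨(u : ℕ), Nat.lt_of_succ_lt h1⟩ : Fin d) = u := Fin.ext rfl
          have ev : (⟨(u : ℕ) + 1, h1⟩ : Fin d) = v := Fin.ext huv.symm
          have hle := hadj (u : ℕ) h1
          rw [eu, ev] at hle
          have hne2 : σ u ≠ σ v := by
            intro h
            have h' := σ.injective h
            rw [h'] at huv
            omega
          exact lt_of_le_of_ne hle hne2
        intro u v huv
        obtain ⟨n, hn⟩ : ∃ n : ℕ, (v : ℕ) = (u : ℕ) + n := ⟨v - u, by omega⟩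
        induction n generalizing v with
        | zero =>
          exfalso
          have := Fin.lt_def.mp huv
          omega
        | succ n ihn =>
          rcases Nat.eq_zero_or_pos n with h0 | hpos
          · exact hstep u v (by omega)
          · have hvlt : (v : ℕ) - 1 < d := by omega
            set v' : Fin d := ⟨(v : ℕ) - 1, hvlt⟩ with hv'
            have hval : (v' : ℕ) = (v : ℕ) - 1 := rfl
            have h1 : σ u < σ v' := by
              apply ihn
              · rw [Fin.lt_def]; omega
              · omega
            have h2 : σ v' < σ v := hstep v' v (by omega)
            exact h1.trans h2
      haveI : WellFoundedLT (Fin d) := Finite.to_wellFoundedLT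
      have hid : ∀ m, σ m = m := by
        have h1 : StrictMono (id : Fin d → Fin d) := strictMono_id
        have h2 : Set.range ⇑σ = Set.range (id : Fin d → Fin d) := by
          rw [Set.range_id, Set.range_eq_univ]
          exact σ.surjective
        have := (hmono.range_inj h1).mp h2
        intro m
        exact congrFun this m
      simp only [hid]
      -- identity case: direct from Lipschitz
      have h1 : eucNorm (F α - F β) ≤ K * eucNorm (α - β) := hLip α β hα hβ
      have h2 : eucNorm (F α - F β) ^ 2 ≤ (K * eucNorm (α - β))^2 :=
        pow_le_pow_left₀ (Real.sqrt_nonneg _) h1 2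
      have e1 := eucNorm_sq (F α - F β)
      have e2 := eucNorm_sq (α - β)
      simp only [Pi.sub_apply] at e1 e2
      rw [e1] at h2
      have h3 : ∑ m, (F α m - F β m)^2 ≤ K^2 * ∑ m, (α m - β m)^2 := by
        calc ∑ m, (F α m - F β m)^2 ≤ (K * eucNorm (α - β))^2 := h2
          _ = K^2 * eucNorm (α - β)^2 := by ring
          _ = K^2 * ∑ m, (α m - β m)^2 := by rw [e2]
      rw [Finset.sum_sub_distrib, ← Finset.mul_sum]
      linarith

lemma ds_sum_le {d : ℕ}
    (F : (Fin d → ℝ) → Fin d → ℝ) (K : ℝ)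
    (hbc : ∀ x : Fin d → ℝ, Antitone x → ∀ m n, x m = x n → F x m = F x n)
    (hLip : ∀ x y : Fin d → ℝ, Antitone x → Antitone y →
      eucNorm (F x - F y) ≤ K * eucNorm (x - y))
    (hK : 0 ≤ K)
    (α β : Fin d → ℝ) (hα : Antitone α) (hβ : Antitone β)
    (s : Matrix (Fin d) (Fin d) ℝ) (hs : s ∈ doublyStochastic ℝ (Fin d)) :
    ∑ m, ∑ n, s m n * ((F α m - F β n)^2 - K^2 * (α m - β n)^2) ≤ 0 := by
  classical
  set c : Fin d → Fin d → ℝ :=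
    fun m n => (F α m - F β n)^2 - K^2 * (α m - β n)^2 with hc
  set L : Matrix (Fin d) (Fin d) ℝ → ℝ := fun M => ∑ m, ∑ n, M m n * c m n with hL
  have hlin : IsLinearMap ℝ L := by
    constructor
    · intro M N
      rw [hL]
      simp only [Matrix.add_apply, add_mul, Finset.sum_add_distrib]
    · intro r M
      rw [hL]
      simp only [Matrix.smul_apply, smul_eq_mul, Finset.mul_sum, mul_assoc]
  have hperm : ∀ σ : Equiv.Perm (Fin d), L (σ.permMatrix ℝ) ≤ 0 := by
    intro σ
    have hval : L (σ.permMatrix ℝ) = ∑ m, c m (σ m) := by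
      rw [hL]
      simp only
      apply Finset.sum_congr rfl
      intro m _
      rw [show ∑ n, (σ.permMatrix ℝ) m n * c m n = ∑ n, if σ m = n then c m n else 0 from ?_]
      · rw [Finset.sum_ite_eq]
        simp
      · apply Finset.sum_congr rfl
        intro n _
        simp only [Equiv.Perm.permMatrix, PEquiv.toMatrix_apply, Equiv.toPEquiv_apply,
          Option.mem_def, Option.some.injEq]
        by_cases h : σ m = n
        · simp [h]
        · simp [h]
    rw [hval, hc]
    exact perm_sum_le F K hbc hLip hK α β hα hβ σ
  have hconv : Convex ℝ {M : Matrix (Fin d) (Fin d) ℝ | L M ≤ 0} :=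
    convex_halfSpace_le hlin 0
  have hsub : {M : Matrix (Fin d) (Fin d) ℝ | ∃ σ : Equiv.Perm (Fin d), σ.permMatrix ℝ = M}
      ⊆ {M | L M ≤ 0} := by
    rintro M ⟨σ, rfl⟩
    exact hperm σ
  have hs2 : s ∈ convexHull ℝ {M : Matrix (Fin d) (Fin d) ℝ |
      ∃ σ : Equiv.Perm (Fin d), σ.permMatrix ℝ = M} := by
    rw [← doublyStochastic_eq_convexHull_permMatrix]
    exact hs
  exact convexHull_min hsub hconv hs2

lemma star_mul_self_complex (z : ℂ) : star z * z = ((‖z‖^2 : ℝ) : ℂ) := by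
  rw [Complex.star_def, mul_comm, Complex.mul_conj]
  exact Complex.ofReal_inj.mpr (by rw [Complex.sq_norm])

lemma trace_eq_frobsq {d : ℕ} (M : Matrix (Fin d) (Fin d) ℂ) :
    Matrix.trace (star M * M) = ((∑ i, ∑ j, ‖M i j‖^2 : ℝ) : ℂ) := by
  rw [Matrix.trace]
  push_cast
  rw [Finset.sum_comm]
  apply Finset.sum_congr rfl
  intro j _
  rw [Matrix.diag_apply, Matrix.mul_apply]
  apply Finset.sum_congr rfl
  intro i _
  rw [Matrix.star_eq_conjTranspose, Matrix.conjTranspose_apply, star_mul_self_complex]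
  push_cast
  ring

lemma frobsq_conj {d : ℕ} (P Q N : Matrix (Fin d) (Fin d) ℂ)
    (hP : star P * P = 1) (hQ : star Q * Q = 1) :
    ∑ i, ∑ j, ‖(P * N * star Q) i j‖^2 = ∑ i, ∑ j, ‖N i j‖^2 := by
  have e : star (P * N * star Q) * (P * N * star Q) = Q * (star N * N) * star Q := by
    rw [Matrix.star_mul, Matrix.star_mul, star_star]
    simp only [mul_assoc]
    rw [← mul_assoc (star P) P, hP, one_mul]
  apply Complex.ofReal_inj.mp
  rw [← trace_eq_frobsq, ← trace_eq_frobsq, e, Matrix.trace_mul_cycle, hQ, one_mul]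


/-- **Lipschitz continuity of `𝓛_F`** (Theorem 2 of the paper).
If `F : ℝ^d_≥ → ℝ^d` is block-constant on all of `ℝ^d_≥` and Lipschitz
continuous with constant `K` (w.r.t. the Euclidean norm), then for all
Hermitian matrices `A = U Λ_α U*` and `B = V Λ_β V*` (with non-increasingly
ordered eigenvalues),
`‖𝓛_F(A) − 𝓛_F(B)‖₂ ≤ K ‖A − B‖₂` in the Frobenius norm. -/
theorem LF_lipschitz {d : ℕ}
    (F : (Fin d → ℝ) → Fin d → ℝ) (K : ℝ) (hK : 0 ≤ K)
    -- `F` is block-constant on `ℝ^d_≥`: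
    (hbc : ∀ x : Fin d → ℝ, Antitone x → ∀ m n, x m = x n → F x m = F x n)
    -- `F` is Lipschitz with constant `K` on `ℝ^d_≥`, w.r.t. the Euclidean norm:
    (hLip : ∀ x y : Fin d → ℝ, Antitone x → Antitone y →
      eucNorm (F x - F y) ≤ K * eucNorm (x - y))
    (A B U V : Matrix (Fin d) (Fin d) ℂ) (α β : Fin d → ℝ)
    (hA : A.IsHermitian) (hB : B.IsHermitian)
    (hU : U ∈ Matrix.unitaryGroup (Fin d) ℂ)
    (hV : V ∈ Matrix.unitaryGroup (Fin d) ℂ)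
    (hα : Antitone α) (hβ : Antitone β)
    (hAdec : A = U * Matrix.diagonal (fun i => (α i : ℂ)) * star U)
    (hBdec : B = V * Matrix.diagonal (fun i => (β i : ℂ)) * star V) :
    frob (U * Matrix.diagonal (fun i => (F α i : ℂ)) * star U
        - V * Matrix.diagonal (fun i => (F β i : ℂ)) * star V)
      ≤ K * frob (A - B) := by
  classical
  have hU1 : star U * U = 1 := Matrix.mem_unitaryGroup_iff'.mp hU
  have hU2 : U * star U = 1 := Matrix.mem_unitaryGroup_iff.mp hU
  have hV1 : star V * V = 1 := Matrix.mem_unitaryGroup_iff'.mp hV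
  have hV2 : V * star V = 1 := Matrix.mem_unitaryGroup_iff.mp hV
  set W : Matrix (Fin d) (Fin d) ℂ := star U * V with hWdef
  have hstarW : star W = star V * U := by
    rw [hWdef, Matrix.star_mul, star_star]
  have hWW : W * star W = 1 := by
    rw [hWdef, hstarW]
    calc star U * V * (star V * U) = star U * (V * star V) * U := by
          simp only [mul_assoc]
      _ = star U * U := by rw [hV2, mul_one]
      _ = 1 := hU1
  have hW'W : star W * W = 1 := by
    rw [hWdef, hstarW]
    calc star V * U * (star U * V) = star V * (U * star U) * V := by
          simp only [mul_assoc]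
      _ = star V * V := by rw [hU2, mul_one]
      _ = 1 := hV1
  -- the doubly stochastic matrix
  set s : Matrix (Fin d) (Fin d) ℝ := fun m n => ‖W m n‖^2 with hs
  have hrow : ∀ m, ∑ n, s m n = 1 := by
    intro m
    have h1 : (W * star W) m m = 1 := by rw [hWW]; simp
    rw [Matrix.mul_apply] at h1
    have h2 : ∀ k, W m k * star W k m = ((‖W m k‖^2 : ℝ) : ℂ) := by
      intro k
      rw [Matrix.star_eq_conjTranspose, Matrix.conjTranspose_apply, mul_comm,
        star_mul_self_complex]
    rw [Finset.sum_congr rfl (fun k _ => h2 k)] at h1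
    have h3 : ((∑ n, ‖W m n‖^2 : ℝ) : ℂ) = ((1 : ℝ) : ℂ) := by push_cast; push_cast at h1; rw [h1]
    have := Complex.ofReal_inj.mp h3
    rw [hs]; exact this
  have hcol : ∀ n, ∑ m, s m n = 1 := by
    intro n
    have h1 : (star W * W) n n = 1 := by rw [hW'W]; simp
    rw [Matrix.mul_apply] at h1
    have h2 : ∀ k, star W n k * W k n = ((‖W k n‖^2 : ℝ) : ℂ) := by
      intro k
      rw [Matrix.star_eq_conjTranspose, Matrix.conjTranspose_apply, star_mul_self_complex]
    rw [Finset.sum_congr rfl (fun k _ => h2 k)] at h1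
    have h3 : ((∑ m, ‖W m n‖^2 : ℝ) : ℂ) = ((1 : ℝ) : ℂ) := by push_cast; push_cast at h1; rw [h1]
    have := Complex.ofReal_inj.mp h3
    rw [hs]; exact this
  have hsds : s ∈ doublyStochastic ℝ (Fin d) := by
    rw [mem_doublyStochastic_iff_sum]
    exact ⟨fun i j => by rw [hs]; positivity, hrow, hcol⟩
  -- decomposition
  have hdecomp : ∀ v w : Fin d → ℝ,
      U * Matrix.diagonal (fun i => (v i : ℂ)) * star U
        - V * Matrix.diagonal (fun i => (w i : ℂ)) * star V
      = U * (Matrix.diagonal (fun i => (v i : ℂ)) * W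
          - W * Matrix.diagonal (fun i => (w i : ℂ))) * star V := by
    intro v w
    rw [Matrix.mul_sub, Matrix.sub_mul]
    congr 1
    · rw [hWdef]
      simp only [mul_assoc]
      rw [hV2, mul_one]
    · rw [hWdef]
      simp only [mul_assoc]
      rw [← mul_assoc U (star U), hU2, one_mul]
  have hentry : ∀ (v w : Fin d → ℝ) (m n : Fin d),
      (Matrix.diagonal (fun i => (v i : ℂ)) * W
        - W * Matrix.diagonal (fun i => (w i : ℂ))) m n
      = ((v m - w n : ℝ) : ℂ) * W m n := by
    intro v w m n
    rw [Matrix.sub_apply, Matrix.diagonal_mul, Matrix.mul_diagonal]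
    push_cast
    ring
  have hfrob : ∀ v w : Fin d → ℝ,
      frob (U * Matrix.diagonal (fun i => (v i : ℂ)) * star U
        - V * Matrix.diagonal (fun i => (w i : ℂ)) * star V)
      = Real.sqrt (∑ m, ∑ n, (v m - w n)^2 * s m n) := by
    intro v w
    rw [hdecomp v w, frob, frobsq_conj U V _ hU1 hV1]
    congr 1
    apply Finset.sum_congr rfl
    intro m _
    apply Finset.sum_congr rfl
    intro n _
    rw [hentry v w m n, norm_mul, mul_pow, Complex.norm_real, Real.norm_eq_abs, sq_abs, hs]
  -- the key inequality
  have hds := ds_sum_le F K hbc hLip hK α β hα hβ s hsds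
  have hexpand : ∑ m, ∑ n, (s m n * ((F α m - F β n)^2 - K^2 * (α m - β n)^2))
      = (∑ m, ∑ n, (F α m - F β n)^2 * s m n)
        - K^2 * ∑ m, ∑ n, (α m - β n)^2 * s m n := by
    rw [Finset.mul_sum, ← Finset.sum_sub_distrib]
    apply Finset.sum_congr rfl
    intro m _
    rw [Finset.mul_sum, ← Finset.sum_sub_distrib]
    apply Finset.sum_congr rfl
    intro n _
    ring
  have hkey : ∑ m, ∑ n, (F α m - F β n)^2 * s m n
      ≤ K^2 * ∑ m, ∑ n, (α m - β n)^2 * s m n := by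
    rw [hexpand] at hds
    linarith
  -- conclude
  rw [hfrob (F α) (F β), hAdec, hBdec, hfrob α β]
  have hnn : 0 ≤ ∑ m, ∑ n, (α m - β n)^2 * s m n := by
    apply Finset.sum_nonneg
    intro m _
    apply Finset.sum_nonneg
    intro n _
    rw [hs]
    positivity
  calc Real.sqrt (∑ m, ∑ n, (F α m - F β n)^2 * s m n)
      ≤ Real.sqrt (K^2 * ∑ m, ∑ n, (α m - β n)^2 * s m n) := Real.sqrt_le_sqrt hkey
    _ = Real.sqrt (K^2) * Real.sqrt (∑ m, ∑ n, (α m - β n)^2 * s m n) :=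
        Real.sqrt_mul (sq_nonneg K) _
    _ = K * Real.sqrt (∑ m, ∑ n, (α m - β n)^2 * s m n) := by
        rw [Real.sqrt_sq hK]
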